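/- Monotonicity of log-sum-exp in temperature: for d : Fin C → ℝ, the map τ ↦ -(2/τ) log ∑_c exp(-(τ/2) d_c) is non-decreasing on (0, ∞). -/

import Mathlib

/-- ∑ a_c ^ p ≤ (∑ a_c) ^ p for nonneg a and p ≥ 1. -/
lemma sum_rpow_le_rpow_sum' {C : ℕ} (a : Fin C → ℝ) (ha : ∀ c, 0 ≤ a c) {p : ℝ}
    (hp : 1 ≤ p) : (∑ c, a c ^ p) ≤ (∑ c, a c) ^ p := by
  have hS : 0 ≤ ∑ c, a c := Finset.sum_nonneg fun c _ => ha c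
  have h1 : ∀ c : Fin C, a c ^ p ≤ a c * (∑ c, a c) ^ (p - 1) := by
    intro c
    have hle : a c ≤ ∑ c, a c :=
      Finset.single_le_sum (fun i _ => ha i) (Finset.mem_univ c)
    calc a c ^ p = a c ^ (1 + (p - 1)) := by ring_nf
      _ = a c ^ (1:ℝ) * a c ^ (p - 1) := Real.rpow_add' (ha c) (by linarith)
      _ = a c * a c ^ (p - 1) := by rw [Real.rpow_one]
      _ ≤ a c * (∑ c, a c) ^ (p - 1) := by
          exact mul_le_mul_of_nonneg_left
            (Real.rpow_le_rpow (ha c) hle (by linarith)) (ha c)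
  calc (∑ c, a c ^ p) ≤ ∑ c, a c * (∑ c, a c) ^ (p - 1) :=
        Finset.sum_le_sum fun c _ => h1 c
    _ = (∑ c, a c) * (∑ c, a c) ^ (p - 1) := by rw [← Finset.sum_mul]
    _ = (∑ c, a c) ^ (1 + (p - 1)) := by
        rw [Real.rpow_add' hS (by linarith), Real.rpow_one]
    _ = (∑ c, a c) ^ p := by ring_nf

/-- The scaled negative log-sum-exp is non-decreasing in the temperature τ on (0, ∞). -/
theorem neg_logsumexp_monotone_in_temperature (C : ℕ) (hC : 0 < C) (d : Fin C → ℝ) :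
    ∀ τ₁ τ₂ : ℝ, 0 < τ₁ → τ₁ ≤ τ₂ →
      -(2 / τ₁) * Real.log (∑ c, Real.exp (-(τ₁ / 2) * d c)) ≤
        -(2 / τ₂) * Real.log (∑ c, Real.exp (-(τ₂ / 2) * d c)) := by
  intro τ₁ τ₂ h1 h12
  have h2 : 0 < τ₂ := lt_of_lt_of_le h1 h12
  set S1 := ∑ c, Real.exp (-(τ₁ / 2) * d c) with hS1def
  set S2 := ∑ c, Real.exp (-(τ₂ / 2) * d c) with hS2def
  have hS1pos : 0 < S1 := by
    apply Finset.sum_pos (fun c _ => Real.exp_pos _)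
    exact Finset.univ_nonempty_iff.mpr ⟨⟨0, hC⟩⟩
  set p := τ₂ / τ₁ with hpdef
  have hp1 : 1 ≤ p := (one_le_div h1).mpr h12
  have hS2le : S2 ≤ S1 ^ p := by
    have : S2 = ∑ c, (Real.exp (-(τ₁ / 2) * d c)) ^ p := by
      apply Finset.sum_congr rfl
      intro c _
      rw [← Real.exp_mul]
      congr 1
      rw [hpdef]
      field_simp
    rw [this]
    exact sum_rpow_le_rpow_sum' _ (fun c => (Real.exp_pos _).le) hp1
  have hS2pos : 0 < S2 := by
    apply Finset.sum_pos (fun c _ => Real.exp_pos _)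
    exact Finset.univ_nonempty_iff.mpr ⟨⟨0, hC⟩⟩
  have hlog : Real.log S2 ≤ p * Real.log S1 := by
    calc Real.log S2 ≤ Real.log (S1 ^ p) :=
          Real.log_le_log hS2pos hS2le
      _ = p * Real.log S1 := Real.log_rpow hS1pos p
  have key : (2 / τ₂) * Real.log S2 ≤ (2 / τ₁) * Real.log S1 := by
    have : (2 / τ₂) * (p * Real.log S1) = (2 / τ₁) * Real.log S1 := by
      field_simp [hpdef]
      rw [hpdef, mul_comm (τ₂ / τ₁), mul_assoc, div_mul_cancel₀ _ h1.ne', mul_comm]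
    calc (2 / τ₂) * Real.log S2 ≤ (2 / τ₂) * (p * Real.log S1) :=
          mul_le_mul_of_nonneg_left hlog (by positivity)
      _ = (2 / τ₁) * Real.log S1 := this
  linarith
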